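/- arXiv:2512.14338 — 2 statements merged into one kernel-verified Lean document; each statement's English description precedes it below -/
import Mathlib

section
/- Let β ∈ ℝ³ and θ = F(β). For any k with 2 ≤ k ≤ v, any edge representation x ∈ C_{v,k} of a k-clique with clique vertex set Clique(x), and any j ∈ {1,…,n}, let r = |Clique(x) ∩ Ind⁻¹(j)| ∈ {0,1,2}. Then the energy difference E(x^{(j)}; θ) − E(x; θ) equals: β₂·k(k−1)/2 + β₃ if r = 0; β₁·(k−1) + β₂·(k(k−1)/2 − (k−1)) + β₃ if r = 1; and −(2β₁·(k−2) + β₂·(k(k−1)/2 − 2k + 3) + β₃) if r = 2. -/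
open scoped BigOperators
open scoped Classical
open Matrix MeasureTheory

namespace HopfieldPaper

/-- The space of (not necessarily admissible) Hopfield parameters `θ = (W, b)`. -/
abbrev Param (n : ℕ) := Matrix (Fin n) (Fin n) ℝ × (Fin n → ℝ)

variable {n : ℕ}

/-- `θ = (W, b)` is a Hopfield parameter: `W` is symmetric with zero diagonal. -/
def IsHopfieldParam (θ : Param n) : Prop :=
  θ.1.IsSymm ∧ ∀ i, θ.1 i i = 0

/-- `x ∈ {0,1}ⁿ`. -/
def IsBinary (x : Fin n → ℝ) : Prop := ∀ i, x i = 0 ∨ x i = 1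

/-- Energy `E(x; θ) = (1/2)·xᵀWx + bᵀx`. -/
noncomputable def energy (x : Fin n → ℝ) (θ : Param n) : ℝ :=
  (1 / 2) * (∑ i, ∑ j, x i * θ.1 i j * x j) + ∑ j, θ.2 j * x j

/-- `x^{(j)}`: the vector differing from `x` exactly in coordinate `j`. -/
noncomputable def flip (x : Fin n → ℝ) (j : Fin n) : Fin n → ℝ :=
  Function.update x j (1 - x j)

/-- The inner product on parameter space.  Under the identification of
`θ = (W, b)` with `ω = (√2·a, b) ∈ ℝ^q` (`a` the strictly upper-triangular
entries of `W`), the Euclidean inner product on `ℝ^q` corresponds to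
`⟨θ, η⟩ = Σᵢⱼ Wᵢⱼ·W'ᵢⱼ + Σⱼ bⱼ·b'ⱼ`; in particular `‖ω‖² = ‖W‖_F² + ‖b‖²`. -/
noncomputable def pInner (θ η : Param n) : ℝ :=
  (∑ i, ∑ j, θ.1 i j * η.1 i j) + ∑ j, θ.2 j * η.2 j

/-- The norm on parameter space: `‖ω‖ = √(‖W‖_F² + ‖b‖²)`. -/
noncomputable def pNorm (θ : Param n) : ℝ := Real.sqrt (pInner θ θ)

/-- The representer `u_j(x)`: the unique element of parameter space with
`⟨u_j(x), θ⟩ = E(x^{(j)}; θ) − E(x; θ)` for every Hopfield parameter `θ`. -/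
noncomputable def uvec (x : Fin n → ℝ) (j : Fin n) : Param n :=
  (Matrix.of fun i l =>
      if i = j ∧ l ≠ j then (1 - 2 * x j) * x l / 2
      else if l = j ∧ i ≠ j then (1 - 2 * x j) * x i / 2
      else 0,
   fun l => if l = j then 1 - 2 * x j else 0)

/-- `‖x‖₀`: the number of nonzero coordinates. -/
noncomputable def l0norm (x : Fin n → ℝ) : ℕ :=
  (Finset.univ.filter fun i => x i ≠ 0).card

variable {v : ℕ}

/-- The type of unordered pairs of distinct elements of `Fin v`
(the "unordered pairs of `{1,…,v}`"). -/
abbrev EdgeIdx (v : ℕ) := {p : Sym2 (Fin v) // ¬ p.IsDiag}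

/-- The permutation of `Sym2 (Fin v)` induced by a vertex permutation. -/
def sym2Perm (φ : Equiv.Perm (Fin v)) : Equiv.Perm (Sym2 (Fin v)) where
  toFun := Sym2.map φ
  invFun := Sym2.map φ.symm
  left_inv := fun p => by rw [Sym2.map_map]; simp
  right_inv := fun p => by rw [Sym2.map_map]; simp

/-- The induced permutation of unordered pairs of distinct vertices. -/
def offDiagPerm (φ : Equiv.Perm (Fin v)) : Equiv.Perm (EdgeIdx v) :=
  (sym2Perm φ).subtypePerm (fun p => by
    simp only [sym2Perm, Equiv.coe_fn_mk]
    exact (Sym2.isDiag_map φ.injective).not)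

/-- The edge permutation `π_φ` of `{1,…,n}` induced by the vertex permutation
`φ`; it satisfies `π_φ(Ind({a,b})) = Ind({φ(a),φ(b)})`. -/
def edgePerm (Ind : EdgeIdx v ≃ Fin n) (φ : Equiv.Perm (Fin v)) :
    Equiv.Perm (Fin n) :=
  Ind.permCongr (offDiagPerm φ)

/-- `Φ_n`: the set of permutation matrices of vertex-induced edge permutations. -/
noncomputable def PhiSet (Ind : EdgeIdx v ≃ Fin n) :
    Set (Matrix (Fin n) (Fin n) ℝ) :=
  {P | ∃ φ : Equiv.Perm (Fin v), P = (edgePerm Ind φ).permMatrix ℝ}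

/-- The two-element vertex set `Ind⁻¹(j)` of an edge index, as a `Finset`. -/
noncomputable def pairFinset (Ind : EdgeIdx v ≃ Fin n) (j : Fin n) : Finset (Fin v) :=
  Finset.univ.filter (fun a => a ∈ (Ind.symm j : Sym2 (Fin v)))

/-- Edge adjacency: `j ∼ l` iff `|Ind⁻¹(j) ∩ Ind⁻¹(l)| = 1`. -/
noncomputable def edgeAdj (Ind : EdgeIdx v ≃ Fin n) (j l : Fin n) : Prop :=
  (pairFinset Ind j ∩ pairFinset Ind l).card = 1

/-- A permutation of edge indices preserves edge adjacency. -/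
noncomputable def PreservesEdgeAdj (Ind : EdgeIdx v ≃ Fin n)
    (π : Equiv.Perm (Fin n)) : Prop :=
  ∀ j l : Fin n, edgeAdj Ind (π j) (π l) ↔ edgeAdj Ind j l

/-- `Q_n`: the set of permutation matrices of edge-adjacency-preserving
permutations. -/
noncomputable def QSet (Ind : EdgeIdx v ≃ Fin n) :
    Set (Matrix (Fin n) (Fin n) ℝ) :=
  {Q | ∃ π : Equiv.Perm (Fin n), PreservesEdgeAdj Ind π ∧ Q = π.permMatrix ℝ}

/-- Orbit of a vector under a set of matrices: `Orb(x, Γ) = {P·x : P ∈ Γ}`. -/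
noncomputable def morb (Γ : Set (Matrix (Fin n) (Fin n) ℝ)) (x : Fin n → ℝ) :
    Set (Fin n → ℝ) :=
  {y | ∃ P ∈ Γ, y = P.mulVec x}

/-- The linear map `F : ℝ³ → Θ` sending `β` to `(W, b)` with `W_{ij} = 0` if
`i = j`, `W_{ij} = β₁` if `i ∼ j`, `W_{ij} = β₂` if `i ≠ j` and `i ≁ j`, and
`b_j = β₃`. -/
noncomputable def Fmap (Ind : EdgeIdx v ≃ Fin n) (β : ℝ × ℝ × ℝ) : Param n :=
  (Matrix.of fun i j =>
      if i = j then 0 else if edgeAdj Ind i j then β.1 else β.2.1,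
   fun _ => β.2.2)

/-- The edge representation of the clique graph on the vertex set `K`. -/
noncomputable def cliqueRep (Ind : EdgeIdx v ≃ Fin n) (K : Finset (Fin v)) :
    Fin n → ℝ :=
  fun j => if (∀ a ∈ (Ind.symm j : Sym2 (Fin v)), a ∈ K) then 1 else 0

/-- `C_{v,k}`: edge representations of `k`-clique graphs on `v` vertices. -/
noncomputable def CliqueReps (Ind : EdgeIdx v ≃ Fin n) (k : ℕ) :
    Set (Fin n → ℝ) :=
  {x | ∃ K : Finset (Fin v), K.card = k ∧ x = cliqueRep Ind K}


section Aux

variable {v n : ℕ}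

lemma energy_flip_sub (θ : Param n) (hsym : θ.1.IsSymm) (hdiag : ∀ i, θ.1 i i = 0)
    (x : Fin n → ℝ) (j : Fin n) :
    energy (flip x j) θ - energy x θ
      = (1 - 2 * x j) * ((∑ l, θ.1 j l * x l) + θ.2 j) := by
  have hy : ∀ i, flip x j i = x i + (1 - 2 * x j) * (if i = j then 1 else 0) := by
    intro i
    by_cases h : i = j <;> simp [flip, Function.update, h] <;> ring
  simp only [energy, hy]
  simp only [mul_add, add_mul, Finset.sum_add_distrib, mul_ite, ite_mul, mul_zero, zero_mul,
    mul_one, one_mul, Finset.sum_ite_eq', Finset.mem_univ, if_true]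
  rw [hdiag j]
  have h1 : ∀ i, x i * θ.1 i j = θ.1 j i * x i := fun i => by rw [hsym.apply]; ring
  simp only [h1]
  have h2 : (∑ i, ∑ l, if i = j then (1 - 2 * x j) * θ.1 i l * x l else 0)
      = ∑ l, (1 - 2 * x j) * (θ.1 j l * x l) := by
    rw [Finset.sum_comm]; simp [mul_assoc]
  rw [h2, ← Finset.mul_sum]
  have h3 : (∑ i, θ.1 j i * x i * (1 - 2 * x j))
      = (1 - 2 * x j) * ∑ l, θ.1 j l * x l := by
    rw [Finset.mul_sum]; exact Finset.sum_congr rfl fun i _ => by ring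
  rw [h3]; ring

lemma mem_pairFinset (Ind : EdgeIdx v ≃ Fin n) (l : Fin n) (a : Fin v) :
    a ∈ pairFinset Ind l ↔ a ∈ (Ind.symm l : Sym2 (Fin v)) := by
  simp [pairFinset]

lemma pairFinset_spec (Ind : EdgeIdx v ≃ Fin n) (l : Fin n) :
    ∃ a b : Fin v, a ≠ b ∧ (Ind.symm l : Sym2 (Fin v)) = s(a, b) ∧
      pairFinset Ind l = {a, b} := by
  obtain ⟨⟨a, b⟩, h⟩ := Quot.exists_rep (Ind.symm l : Sym2 (Fin v))
  have h' : (Ind.symm l : Sym2 (Fin v)) = s(a, b) := h.symm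
  have hab : a ≠ b := by
    have := (Ind.symm l).2
    rw [h'] at this
    simpa using this
  refine ⟨a, b, hab, h', ?_⟩
  ext c
  simp [mem_pairFinset, h']

lemma pairFinset_card (Ind : EdgeIdx v ≃ Fin n) (l : Fin n) :
    (pairFinset Ind l).card = 2 := by
  obtain ⟨a, b, hab, -, h⟩ := pairFinset_spec Ind l
  rw [h, Finset.card_insert_of_notMem (by simpa using hab), Finset.card_singleton]

lemma pairFinset_injective (Ind : EdgeIdx v ≃ Fin n) :
    Function.Injective (pairFinset Ind) := by
  intro l l' h
  obtain ⟨a, b, hab, hs, hf⟩ := pairFinset_spec Ind l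
  obtain ⟨c, d, hcd, hs', hf'⟩ := pairFinset_spec Ind l'
  have : s(a, b) = s(c, d) := by
    have hset : ({a, b} : Finset (Fin v)) = {c, d} := by rw [← hf, ← hf', h]
    have ha : a = c ∨ a = d := by
      have := hset ▸ (Finset.mem_insert_self a {b}); simpa using this
    have hb : b = c ∨ b = d := by
      have : b ∈ ({c, d} : Finset (Fin v)) := by rw [← hset]; simp
      simpa using this
    rcases ha with rfl | rfl <;> rcases hb with rfl | rfl <;> simp_all [Sym2.eq_swap]
  have : Ind.symm l = Ind.symm l' := Subtype.ext (hs.trans (this.trans hs'.symm))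
  exact Ind.symm.injective this

lemma pairFinset_surj (Ind : EdgeIdx v ≃ Fin n) (e : Finset (Fin v)) (he : e.card = 2) :
    ∃ l, pairFinset Ind l = e := by
  obtain ⟨a, b, hab, rfl⟩ := Finset.card_eq_two.mp he
  refine ⟨Ind ⟨s(a, b), by simpa using hab⟩, ?_⟩
  ext c
  simp [mem_pairFinset]

lemma card_filter_pf (Ind : EdgeIdx v ≃ Fin n) (P : Finset (Fin v) → Prop) [DecidablePred P] :
    (Finset.univ.filter fun l : Fin n => P (pairFinset Ind l)).card
      = ((Finset.univ.powersetCard 2).filter P).card := by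
  apply Finset.card_bij (fun l _ => pairFinset Ind l)
  · intro l hl
    simp only [Finset.mem_filter] at hl ⊢
    exact ⟨Finset.mem_powersetCard.mpr ⟨Finset.subset_univ _, pairFinset_card Ind l⟩, hl.2⟩
  · intro l _ l' _ h
    exact pairFinset_injective Ind h
  · intro e he
    simp only [Finset.mem_filter, Finset.mem_powersetCard] at he
    obtain ⟨⟨-, he2⟩, hP⟩ := he
    obtain ⟨l, hl⟩ := pairFinset_surj Ind e he2
    exact ⟨l, by simp [hl, hP], hl⟩

lemma card_filter_inter_one {α : Type*} [DecidableEq α] [Fintype α]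
    (K p : Finset α) :
    ((Finset.univ.powersetCard 2).filter fun e : Finset α => e ⊆ K ∧ (p ∩ e).card = 1).card
      = (K ∩ p).card * (K \ p).card := by
  rw [← Finset.card_product]
  refine (Finset.card_bij (fun ab _ => ({ab.1, ab.2} : Finset α)) ?_ ?_ ?_).symm
  · rintro ⟨a, b⟩ hab
    simp only [Finset.mem_product, Finset.mem_inter, Finset.mem_sdiff] at hab
    obtain ⟨⟨haK, hap⟩, hbK, hbp⟩ := hab
    have hne : a ≠ b := fun h => hbp (h ▸ hap)
    simp only [Finset.mem_filter, Finset.mem_powersetCard]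
    refine ⟨⟨Finset.subset_univ _,
      by rw [Finset.card_insert_of_notMem (by simpa using hne)]; rfl⟩, ?_, ?_⟩
    · intro c hc
      rcases Finset.mem_insert.mp hc with rfl | hc
      · exact haK
      · exact (Finset.mem_singleton.mp hc) ▸ hbK
    · have : p ∩ ({a, b} : Finset α) = {a} := by
        ext c
        simp only [Finset.mem_inter, Finset.mem_insert, Finset.mem_singleton]
        constructor
        · rintro ⟨hcp, rfl | rfl⟩
          · rfl
          · exact absurd hcp hbp
        · rintro rfl; exact ⟨hap, Or.inl rfl⟩
      rw [this, Finset.card_singleton]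
  · rintro ⟨a, b⟩ ha ⟨c, d⟩ hc h
    simp only [Finset.mem_product, Finset.mem_inter, Finset.mem_sdiff] at ha hc
    have h' : ({a, b} : Finset α) = {c, d} := h
    have hac : a = c := by
      have : a ∈ ({c, d} : Finset α) := h' ▸ Finset.mem_insert_self a {b}
      rcases Finset.mem_insert.mp this with rfl | hd
      · rfl
      · exact absurd (Finset.mem_singleton.mp hd ▸ ha.1.2) hc.2.2
    have hbd : b = d := by
      have : b ∈ ({c, d} : Finset α) := h' ▸ (by simp : b ∈ ({a, b} : Finset α))
      rcases Finset.mem_insert.mp this with rfl | hd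
      · exact absurd hc.1.2 ha.2.2
      · exact Finset.mem_singleton.mp hd
    simp [hac, hbd]
  · intro e he
    simp only [Finset.mem_filter, Finset.mem_powersetCard] at he
    obtain ⟨⟨-, he2⟩, heK, hpe⟩ := he
    obtain ⟨a, ha⟩ := Finset.card_eq_one.mp hpe
    have hape : (e \ p).card = 1 := by
      have h1 : (e ∩ p).card = 1 := by rwa [Finset.inter_comm] at hpe
      have := Finset.card_sdiff_add_card_inter e p
      omega
    obtain ⟨b, hb⟩ := Finset.card_eq_one.mp hape
    have hae : a ∈ e := by
      have : a ∈ p ∩ e := ha ▸ Finset.mem_singleton_self a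
      exact (Finset.mem_inter.mp this).2
    have hap : a ∈ p := by
      have : a ∈ p ∩ e := ha ▸ Finset.mem_singleton_self a
      exact (Finset.mem_inter.mp this).1
    have hbe : b ∈ e := by
      have : b ∈ e \ p := hb ▸ Finset.mem_singleton_self b
      exact (Finset.mem_sdiff.mp this).1
    have hbp : b ∉ p := by
      have : b ∈ e \ p := hb ▸ Finset.mem_singleton_self b
      exact (Finset.mem_sdiff.mp this).2
    refine ⟨(a, b), ?_, ?_⟩
    · simp only [Finset.mem_product, Finset.mem_inter, Finset.mem_sdiff]
      exact ⟨⟨heK hae, hap⟩, heK hbe, hbp⟩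
    · have hne : a ≠ b := fun h => hbp (h ▸ hap)
      have hsub : ({a, b} : Finset α) ⊆ e := by
        intro c hc
        rcases Finset.mem_insert.mp hc with rfl | hc
        · exact hae
        · exact Finset.mem_singleton.mp hc ▸ hbe
      have hcard : ({a, b} : Finset α).card = 2 := by
        rw [Finset.card_insert_of_notMem (by simpa using hne)]; rfl
      show ({a, b} : Finset α) = e
      exact Finset.eq_of_subset_of_card_le hsub (by rw [he2, hcard])

lemma card_filter_disj {α : Type*} [DecidableEq α] [Fintype α]
    (K p : Finset α) (hp : p.card = 2) :
    ((Finset.univ.powersetCard 2).filter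
        fun e : Finset α => e ⊆ K ∧ e ≠ p ∧ (p ∩ e).card ≠ 1).card
      = (K \ p).card.choose 2 := by
  rw [← Finset.card_powersetCard]
  congr 1
  ext e
  simp only [Finset.mem_filter, Finset.mem_powersetCard]
  constructor
  · rintro ⟨⟨-, he2⟩, heK, hep, hpe⟩
    refine ⟨fun c hc => Finset.mem_sdiff.mpr ⟨heK hc, fun hcp => ?_⟩, he2⟩
    have h1 : 1 ≤ (p ∩ e).card := Finset.card_pos.mpr ⟨c, Finset.mem_inter.mpr ⟨hcp, hc⟩⟩
    have h2 : (p ∩ e).card ≤ 2 := hp ▸ Finset.card_le_card Finset.inter_subset_left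
    have hpe' : p ∩ e = p := Finset.eq_of_subset_of_card_le Finset.inter_subset_left (by omega)
    have hpe'' : p ∩ e = e := Finset.eq_of_subset_of_card_le Finset.inter_subset_right (by omega)
    exact hep (hpe''.symm.trans hpe')
  · rintro ⟨heKp, he2⟩
    have hdisj : p ∩ e = ∅ := by
      rw [Finset.eq_empty_iff_forall_notMem]
      rintro c hc
      obtain ⟨hcp, hce⟩ := Finset.mem_inter.mp hc
      exact (Finset.mem_sdiff.mp (heKp hce)).2 hcp
    refine ⟨⟨Finset.subset_univ _, he2⟩, fun c hc => (Finset.mem_sdiff.mp (heKp hc)).1, ?_, ?_⟩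
    · rintro rfl
      obtain ⟨c, hc⟩ := Finset.card_pos.mp (by omega : 0 < e.card)
      exact (Finset.mem_sdiff.mp (heKp hc)).2 hc
    · rw [hdisj]; simp

end Aux

/-- Explicit energy differences of `θ = F(β)` at a `k`-clique
representation, according to `r = |Clique(x) ∩ Ind⁻¹(j)|`. -/
theorem Fmap_clique_energy_diff {v n : ℕ} (hv : 2 ≤ v)
    (Ind : EdgeIdx v ≃ Fin n) (β : ℝ × ℝ × ℝ) (k : ℕ) (hk2 : 2 ≤ k)
    (hkv : k ≤ v) (K : Finset (Fin v)) (hK : K.card = k) (x : Fin n → ℝ)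
    (hx : x = cliqueRep Ind K) (j : Fin n) (r : ℕ)
    (hr : r = (K ∩ pairFinset Ind j).card) :
    (r = 0 →
      energy (flip x j) (Fmap Ind β) - energy x (Fmap Ind β)
        = β.2.1 * ((k : ℝ) * ((k : ℝ) - 1) / 2) + β.2.2) ∧
    (r = 1 →
      energy (flip x j) (Fmap Ind β) - energy x (Fmap Ind β)
        = β.1 * ((k : ℝ) - 1)
          + β.2.1 * ((k : ℝ) * ((k : ℝ) - 1) / 2 - ((k : ℝ) - 1)) + β.2.2) ∧
    (r = 2 →
      energy (flip x j) (Fmap Ind β) - energy x (Fmap Ind β)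
        = -(2 * β.1 * ((k : ℝ) - 2)
            + β.2.1 * ((k : ℝ) * ((k : ℝ) - 1) / 2 - 2 * (k : ℝ) + 3)
            + β.2.2)) := by
  classical
  subst hx
  set x := cliqueRep Ind K with hxdef
  set p : Finset (Fin v) := pairFinset Ind j with hpdef
  have hpcard : p.card = 2 := pairFinset_card Ind j
  -- symmetry and zero diagonal of Fmap
  have hsym : (Fmap Ind β).1.IsSymm := by
    rw [Matrix.IsSymm]
    ext i l
    simp only [Matrix.transpose_apply, Fmap, Matrix.of_apply]
    have hadj : edgeAdj Ind l i ↔ edgeAdj Ind i l := by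
      unfold edgeAdj; rw [Finset.inter_comm]
    by_cases h : i = l
    · simp [h]
    · simp only [h, Ne.symm h, if_false]
      by_cases h2 : edgeAdj Ind i l
      · simp [h2, hadj.mpr h2]
      · rw [if_neg h2, if_neg (fun hh => h2 (hadj.mp hh))]
  have hdiag : ∀ i, (Fmap Ind β).1 i i = 0 := fun i => by simp [Fmap]
  -- x as indicator of pairFinset ⊆ K
  have hxval : ∀ l, x l = if pairFinset Ind l ⊆ K then 1 else 0 := by
    intro l
    have : (∀ a ∈ (Ind.symm l : Sym2 (Fin v)), a ∈ K) ↔ pairFinset Ind l ⊆ K := by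
      constructor
      · intro h c hc
        exact h c ((mem_pairFinset Ind l c).mp hc)
      · intro h c hc
        exact h ((mem_pairFinset Ind l c).mpr hc)
    simp [hxdef, cliqueRep, this]
  -- the energy difference formula
  rw [show energy (flip x j) (Fmap Ind β) - energy x (Fmap Ind β)
      = (1 - 2 * x j) * ((∑ l, (Fmap Ind β).1 j l * x l) + (Fmap Ind β).2 j)
    from energy_flip_sub _ hsym hdiag x j]
  -- pointwise decomposition of the summand
  have hpt : ∀ l, (Fmap Ind β).1 j l * x l
      = (if pairFinset Ind l ⊆ K ∧ (p ∩ pairFinset Ind l).card = 1 then β.1 else 0)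
        + (if pairFinset Ind l ⊆ K ∧ pairFinset Ind l ≠ p
            ∧ (p ∩ pairFinset Ind l).card ≠ 1 then β.2.1 else 0) := by
    intro l
    rw [hxval l]
    have hWjl : (Fmap Ind β).1 j l
        = if j = l then 0 else if edgeAdj Ind j l then β.1 else β.2.1 := rfl
    have hadj : edgeAdj Ind j l ↔ (p ∩ pairFinset Ind l).card = 1 := Iff.rfl
    by_cases h1 : j = l
    · subst h1
      simp only [← hpdef]
      simp [hWjl, hpcard]
    · have hne : pairFinset Ind l ≠ p := fun h => h1 (pairFinset_injective Ind h.symm)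
      by_cases h2 : edgeAdj Ind j l
      · have hc1 : (p ∩ pairFinset Ind l).card = 1 := hadj.mp h2
        by_cases h3 : pairFinset Ind l ⊆ K <;>
          simp [hWjl, h1, h2, h3, hc1]
      · have hc1 : (p ∩ pairFinset Ind l).card ≠ 1 := fun h => h2 (hadj.mpr h)
        by_cases h3 : pairFinset Ind l ⊆ K <;>
          simp [hWjl, h1, h2, h3, hc1, hne]
  -- evaluate the sum
  have hb : (Fmap Ind β).2 j = β.2.2 := rfl
  set A : ℕ := ((Finset.univ.powersetCard 2).filter
      fun e : Finset (Fin v) => e ⊆ K ∧ (p ∩ e).card = 1).card with hAdef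
  set B : ℕ := ((Finset.univ.powersetCard 2).filter
      fun e : Finset (Fin v) => e ⊆ K ∧ e ≠ p ∧ (p ∩ e).card ≠ 1).card with hBdef
  have hsum : (∑ l, (Fmap Ind β).1 j l * x l) = β.1 * A + β.2.1 * B := by
    calc (∑ l, (Fmap Ind β).1 j l * x l)
        = (∑ l, if pairFinset Ind l ⊆ K ∧ (p ∩ pairFinset Ind l).card = 1 then β.1 else 0)
          + (∑ l, if pairFinset Ind l ⊆ K ∧ pairFinset Ind l ≠ p
              ∧ (p ∩ pairFinset Ind l).card ≠ 1 then β.2.1 else 0) := by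
          rw [← Finset.sum_add_distrib]
          exact Finset.sum_congr rfl fun l _ => hpt l
      _ = β.1 * A + β.2.1 * B := by
          have h1 : (∑ l, if pairFinset Ind l ⊆ K ∧ (p ∩ pairFinset Ind l).card = 1
              then β.1 else 0) = β.1 * A := by
            rw [hAdef, ← card_filter_pf Ind (fun e => e ⊆ K ∧ (p ∩ e).card = 1)]
            simp [Finset.sum_boole, Finset.sum_ite, mul_comm]
          have h2 : (∑ l, if pairFinset Ind l ⊆ K ∧ pairFinset Ind l ≠ p
              ∧ (p ∩ pairFinset Ind l).card ≠ 1 then β.2.1 else 0) = β.2.1 * B := by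
            rw [hBdef, ← card_filter_pf Ind (fun e => e ⊆ K ∧ e ≠ p ∧ (p ∩ e).card ≠ 1)]
            simp [Finset.sum_boole, Finset.sum_ite, mul_comm]
          rw [h1, h2]
  have hAval : A = (K ∩ p).card * (K \ p).card := card_filter_inter_one K p
  have hBval : B = (K \ p).card.choose 2 := hBdef ▸ card_filter_disj K p hpcard
  have hKp : (K \ p).card = k - r := by
    have := Finset.card_sdiff_add_card_inter K p
    omega
  have hrle : r ≤ 2 := by
    rw [hr]
    calc (K ∩ p).card ≤ p.card := Finset.card_le_card Finset.inter_subset_right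
      _ = 2 := hpcard
  -- value of x j
  have hxj : x j = if r = 2 then 1 else 0 := by
    rw [hxval j, ← hpdef]
    by_cases h : p ⊆ K
    · have : K ∩ p = p := by
        rw [Finset.inter_comm]
        exact Finset.inter_eq_left.mpr h
      have hr2 : r = 2 := by rw [hr, this, hpcard]
      simp [h, hr2]
    · have hr2 : r ≠ 2 := by
        intro hh
        apply h
        have hsub : K ∩ p ⊆ p := Finset.inter_subset_right
        have : K ∩ p = p := Finset.eq_of_subset_of_card_le hsub (by omega)
        rw [← this]
        exact Finset.inter_subset_left
      simp [h, hr2]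
  rw [hsum, hb, hAval, hBval, hKp, ← hr, hxj]
  refine ⟨?_, ?_, ?_⟩
  · rintro rfl
    rw [if_neg (by omega : ¬(0:ℕ) = 2), Nat.sub_zero, Nat.zero_mul, Nat.cast_zero,
      Nat.cast_choose_two]
    ring
  · rintro rfl
    rw [if_neg (by omega : ¬(1:ℕ) = 2), Nat.one_mul, Nat.cast_choose_two,
      Nat.cast_sub (by omega : 1 ≤ k), Nat.cast_one]
    ring
  · rintro rfl
    rw [if_pos rfl, Nat.cast_choose_two, Nat.cast_mul,
      Nat.cast_sub (by omega : 2 ≤ k), Nat.cast_two]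
    ring


end HopfieldPaper
end

section
/- Let Γ be a finite subgroup of the group of n×n permutation matrices, let x₀ ∈ {0,1}ⁿ, and let O = Orb(x₀, Γ); assume |O| = |Γ|. Suppose μ_O = (1/|O|)·Σ_{x ∈ O} ū(x) ≠ 0, so that ω* = AHSVM(O) is well defined, and let θ* be the Hopfield parameter corresponding to ω*. Then θ* is Γ-invariant: θ* ∈ Ψ(Γ). -/
open scoped BigOperators
open scoped Classical
open Matrix MeasureTheory

namespace HopfieldPaper

variable {n : ℕ}

/-- The averaged representer `ū(x) = (1/n)·Σ_{j=1}^n u_j(x)`. -/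
noncomputable def ubar (x : Fin n → ℝ) : Param n :=
  (n : ℝ)⁻¹ • ∑ j, uvec x j

/-- Action of a permutation matrix `Q` on parameters: `Qθ := (QᵀWQ, Qᵀb)`. -/
noncomputable def permAct (σ : Equiv.Perm (Fin n)) (θ : Param n) : Param n :=
  ((σ.permMatrix ℝ)ᵀ * θ.1 * σ.permMatrix ℝ, ((σ.permMatrix ℝ)ᵀ).mulVec θ.2)

/-- `θ ∈ Ψ(Γ)`: `θ` is invariant under (the permutation matrices of) `Γ`. -/
noncomputable def InvariantUnder (Γ : Set (Equiv.Perm (Fin n))) (θ : Param n) : Prop :=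
  ∀ σ ∈ Γ, permAct σ θ = θ

/-- `Orb(x, Γ) = {Q·x : Q ∈ Γ}` (`Q` the permutation matrix of `σ ∈ Γ`). -/
noncomputable def orb (Γ : Set (Equiv.Perm (Fin n))) (x : Fin n → ℝ) :
    Set (Fin n → ℝ) :=
  {y | ∃ σ ∈ Γ, y = ((σ.permMatrix ℝ)).mulVec x}

/-- The averaged-HSVM constraint `(1/|O|)·Σ_{x∈O} ⟨ū(x), ω⟩ ≥ 1` for a
finite set `O`. -/
noncomputable def AvgConstraint (O : Set (Fin n → ℝ)) (ω : Param n) : Prop :=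
  1 ≤ (O.ncard : ℝ)⁻¹ * ∑ᶠ x ∈ O, pInner (ubar x) ω



lemma permMatrix_apply (σ : Equiv.Perm (Fin n)) (i j : Fin n) :
    σ.permMatrix ℝ i j = if σ i = j then 1 else 0 := by
  simp [Equiv.Perm.permMatrix, PEquiv.toMatrix_apply, Equiv.toPEquiv_apply, eq_comm]

lemma transpose_permMatrix (σ : Equiv.Perm (Fin n)) :
    (σ.permMatrix ℝ)ᵀ = (σ⁻¹).permMatrix ℝ := by
  ext i j
  simp only [Matrix.transpose_apply, permMatrix_apply]
  congr 1
  simp only [eq_iff_iff]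
  constructor
  · rintro rfl; simp
  · rintro rfl; simp

lemma permAct_fst (σ : Equiv.Perm (Fin n)) (θ : Param n) (i l : Fin n) :
    (permAct σ θ).1 i l = θ.1 (σ⁻¹ i) (σ⁻¹ l) := by
  have h : (permAct σ θ).1 = θ.1.submatrix (σ⁻¹ : Equiv.Perm (Fin n)) (σ⁻¹ : Equiv.Perm (Fin n)) := by
    show (σ.permMatrix ℝ)ᵀ * θ.1 * σ.permMatrix ℝ = _
    rw [transpose_permMatrix]
    rw [show ((σ⁻¹ : Equiv.Perm (Fin n)).permMatrix ℝ) * θ.1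
        = θ.1.submatrix (σ⁻¹ : Equiv.Perm (Fin n)) id from
      PEquiv.toMatrix_toPEquiv_mul _ _]
    rw [show θ.1.submatrix (σ⁻¹ : Equiv.Perm (Fin n)) id * (σ.permMatrix ℝ)
        = (θ.1.submatrix (σ⁻¹ : Equiv.Perm (Fin n)) id).submatrix id σ.symm from
      PEquiv.mul_toMatrix_toPEquiv _ _]
    ext a b
    simp [Matrix.submatrix_apply]
  rw [h]; rfl

lemma permAct_snd (σ : Equiv.Perm (Fin n)) (θ : Param n) (l : Fin n) :
    (permAct σ θ).2 l = θ.2 (σ⁻¹ l) := by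
  show ((σ.permMatrix ℝ)ᵀ).mulVec θ.2 l = _
  rw [transpose_permMatrix]
  simp only [Matrix.mulVec, dotProduct, permMatrix_apply, ite_mul, one_mul, zero_mul]
  rw [Finset.sum_ite_eq (Finset.univ) (σ⁻¹ l) θ.2]
  simp

lemma permAct_permAct_inv (σ : Equiv.Perm (Fin n)) (θ : Param n) :
    permAct σ⁻¹ (permAct σ θ) = θ := by
  apply Prod.ext
  · ext i l
    rw [permAct_fst, permAct_fst]
    simp
  · funext l
    rw [permAct_snd, permAct_snd]
    simp

lemma pInner_permAct (σ : Equiv.Perm (Fin n)) (a b : Param n) :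
    pInner (permAct σ a) (permAct σ b) = pInner a b := by
  unfold pInner
  congr 1
  · rw [← Equiv.sum_comp (σ⁻¹ : Equiv.Perm (Fin n)) (fun i => ∑ j, a.1 i j * b.1 i j)]
    apply Finset.sum_congr rfl
    intro i _
    rw [← Equiv.sum_comp (σ⁻¹ : Equiv.Perm (Fin n)) (fun j => a.1 _ j * b.1 _ j)]
    apply Finset.sum_congr rfl
    intro j _
    rw [permAct_fst, permAct_fst]
  · rw [← Equiv.sum_comp (σ⁻¹ : Equiv.Perm (Fin n)) (fun j => a.2 j * b.2 j)]
    apply Finset.sum_congr rfl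
    intro j _
    rw [permAct_snd, permAct_snd]

lemma pInner_comm (a b : Param n) : pInner a b = pInner b a := by
  unfold pInner
  congr 1
  · exact Finset.sum_congr rfl fun i _ => Finset.sum_congr rfl fun j _ => mul_comm _ _
  · exact Finset.sum_congr rfl fun j _ => mul_comm _ _

lemma pInner_add_left (a b c : Param n) :
    pInner (a + b) c = pInner a c + pInner b c := by
  unfold pInner
  simp only [Prod.fst_add, Prod.snd_add, Matrix.add_apply, Pi.add_apply, add_mul,
    Finset.sum_add_distrib]
  ring

lemma pInner_sub_left (a b c : Param n) :
    pInner (a - b) c = pInner a c - pInner b c := by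
  unfold pInner
  simp only [Prod.fst_sub, Prod.snd_sub, Matrix.sub_apply, Pi.sub_apply, sub_mul,
    Finset.sum_sub_distrib]
  ring

lemma pInner_smul_left (c : ℝ) (a b : Param n) :
    pInner (c • a) b = c * pInner a b := by
  unfold pInner
  simp only [Prod.smul_fst, Prod.smul_snd, Matrix.smul_apply, Pi.smul_apply, smul_eq_mul,
    mul_assoc, ← Finset.mul_sum]
  ring

lemma pInner_self_nonneg (a : Param n) : 0 ≤ pInner a a := by
  unfold pInner
  have h1 : (0:ℝ) ≤ ∑ i, ∑ j, a.1 i j * a.1 i j :=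
    Finset.sum_nonneg fun i _ => Finset.sum_nonneg fun j _ => mul_self_nonneg _
  have h2 : (0:ℝ) ≤ ∑ j, a.2 j * a.2 j :=
    Finset.sum_nonneg fun j _ => mul_self_nonneg _
  linarith

lemma pInner_self_eq_zero {a : Param n} (h : pInner a a = 0) : a = 0 := by
  unfold pInner at h
  have h1 : (0:ℝ) ≤ ∑ i, ∑ j, a.1 i j * a.1 i j :=
    Finset.sum_nonneg fun i _ => Finset.sum_nonneg fun j _ => mul_self_nonneg _
  have h2 : (0:ℝ) ≤ ∑ j, a.2 j * a.2 j :=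
    Finset.sum_nonneg fun j _ => mul_self_nonneg _
  have h1' : ∑ i, ∑ j, a.1 i j * a.1 i j = 0 := by linarith
  have h2' : ∑ j, a.2 j * a.2 j = 0 := by linarith
  apply Prod.ext
  · ext i l
    have := (Finset.sum_eq_zero_iff_of_nonneg
      (fun i _ => Finset.sum_nonneg fun j _ => mul_self_nonneg (a.1 i j))).1 h1' i
      (Finset.mem_univ i)
    have := (Finset.sum_eq_zero_iff_of_nonneg
      (fun j _ => mul_self_nonneg (a.1 i j))).1 this l (Finset.mem_univ l)
    have := mul_self_eq_zero.1 this
    simpa using this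
  · funext l
    have := (Finset.sum_eq_zero_iff_of_nonneg
      (fun j _ => mul_self_nonneg (a.2 j))).1 h2' l (Finset.mem_univ l)
    have := mul_self_eq_zero.1 this
    simpa using this


lemma pInner_smul_right (c : ℝ) (a b : Param n) : pInner a (c • b) = c * pInner a b := by
  rw [pInner_comm, pInner_smul_left, pInner_comm]

lemma pInner_add_right (a b c : Param n) : pInner a (b + c) = pInner a b + pInner a c := by
  rw [pInner_comm, pInner_add_left, pInner_comm b a, pInner_comm c a]

lemma pInner_sub_right (a b c : Param n) : pInner a (b - c) = pInner a b - pInner a c := by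
  rw [pInner_comm, pInner_sub_left, pInner_comm b a, pInner_comm c a]

lemma mulVec_permMatrix (σ : Equiv.Perm (Fin n)) (x : Fin n → ℝ) :
    (σ.permMatrix ℝ).mulVec x = fun i => x (σ i) := by
  funext i
  simp only [Matrix.mulVec, dotProduct, permMatrix_apply, ite_mul, one_mul, zero_mul]
  rw [Finset.sum_ite_eq Finset.univ (σ i) x]
  simp

lemma permAct_smul (σ : Equiv.Perm (Fin n)) (c : ℝ) (θ : Param n) :
    permAct σ (c • θ) = c • permAct σ θ := by
  apply Prod.ext
  · ext i l
    rw [permAct_fst]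
    simp [permAct_fst]
  · funext l
    rw [permAct_snd]
    simp [permAct_snd]

lemma permAct_sum {ι : Type*} (σ : Equiv.Perm (Fin n)) (s : Finset ι) (f : ι → Param n) :
    permAct σ (∑ j ∈ s, f j) = ∑ j ∈ s, permAct σ (f j) := by
  apply Prod.ext
  · ext i l
    rw [permAct_fst]
    simp only [Prod.fst_sum, Matrix.sum_apply]
    exact Finset.sum_congr rfl fun j _ => (permAct_fst σ (f j) i l).symm
  · funext l
    rw [permAct_snd]
    simp only [Prod.snd_sum, Finset.sum_apply]
    exact Finset.sum_congr rfl fun j _ => (permAct_snd σ (f j) l).symm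

lemma uvec_perm (σ : Equiv.Perm (Fin n)) (x : Fin n → ℝ) (j : Fin n) :
    permAct σ (uvec x j) = uvec (fun i => x (σ⁻¹ i)) (σ j) := by
  have key : ∀ i l : Fin n, σ⁻¹ i = l ↔ i = σ l := by
    intro i l
    constructor
    · rintro rfl; simp
    · rintro rfl; simp
  have hinv : σ⁻¹ (σ j) = j := by simp
  apply Prod.ext
  · ext i l
    rw [permAct_fst]
    show (if σ⁻¹ i = j ∧ σ⁻¹ l ≠ j then (1 - 2 * x j) * x (σ⁻¹ l) / 2
      else if σ⁻¹ l = j ∧ σ⁻¹ i ≠ j then (1 - 2 * x j) * x (σ⁻¹ i) / 2 else 0) =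
      (if i = σ j ∧ l ≠ σ j then (1 - 2 * x (σ⁻¹ (σ j))) * x (σ⁻¹ l) / 2
      else if l = σ j ∧ i ≠ σ j then (1 - 2 * x (σ⁻¹ (σ j))) * x (σ⁻¹ i) / 2 else 0)
    simp only [ne_eq, key, hinv]
  · funext l
    rw [permAct_snd]
    show (if σ⁻¹ l = j then 1 - 2 * x j else 0) =
      (if l = σ j then 1 - 2 * x (σ⁻¹ (σ j)) else 0)
    simp only [ne_eq, key, hinv]

lemma ubar_perm (σ : Equiv.Perm (Fin n)) (x : Fin n → ℝ) :
    permAct σ (ubar x) = ubar (fun i => x (σ⁻¹ i)) := by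
  unfold ubar
  rw [permAct_smul, permAct_sum]
  congr 1
  rw [← Equiv.sum_comp σ (fun j => uvec (fun i => x (σ⁻¹ i)) j)]
  exact Finset.sum_congr rfl fun j _ => uvec_perm σ x j

lemma orb_finite (Γ : Set (Equiv.Perm (Fin n))) (x : Fin n → ℝ) :
    (orb Γ x).Finite := by
  have : orb Γ x = (fun σ : Equiv.Perm (Fin n) => (σ.permMatrix ℝ).mulVec x) '' Γ := by
    ext y
    simp [orb, eq_comm]
  rw [this]
  exact (Set.toFinite Γ).image _

lemma orb_bijOn (Γ : Subgroup (Equiv.Perm (Fin n))) (x₀ : Fin n → ℝ)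
    (σ : Equiv.Perm (Fin n)) (hσ : σ ∈ Γ) :
    Set.BijOn (fun y : Fin n → ℝ => fun i => y (σ i))
      (orb (Γ : Set (Equiv.Perm (Fin n))) x₀) (orb (Γ : Set (Equiv.Perm (Fin n))) x₀) := by
  have hmem : ∀ τ : Equiv.Perm (Fin n), τ ∈ Γ →
      (fun i => x₀ (τ i)) ∈ orb (Γ : Set (Equiv.Perm (Fin n))) x₀ := by
    intro τ hτ
    exact ⟨τ, hτ, (mulVec_permMatrix τ x₀).symm⟩
  refine ⟨?_, ?_, ?_⟩
  · rintro y ⟨τ, hτ, rfl⟩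
    rw [mulVec_permMatrix]
    exact hmem (τ * σ) (mul_mem hτ hσ)
  · rintro y ⟨τ, hτ, rfl⟩ z ⟨ρ, hρ, rfl⟩ h
    funext i
    have := congrFun h (σ⁻¹ i)
    simpa using this
  · rintro y ⟨τ, hτ, rfl⟩
    refine ⟨fun i => x₀ (τ (σ⁻¹ i)), ?_, ?_⟩
    · exact hmem (τ * σ⁻¹) (mul_mem hτ (inv_mem hσ))
    · rw [mulVec_permMatrix]
      funext i
      simp


/-- The AHSVM solution over a full orbit `O = Orb(x₀, Γ)`
with `|O| = |Γ|` is Γ-invariant. -/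
theorem ahsvm_orbit_invariant {n : ℕ} (Γ : Subgroup (Equiv.Perm (Fin n)))
    (x₀ : Fin n → ℝ) (hx₀ : IsBinary x₀)
    (hcard : (orb (Γ : Set (Equiv.Perm (Fin n))) x₀).ncard = Nat.card Γ)
    (hμ : ((orb (Γ : Set (Equiv.Perm (Fin n))) x₀).ncard : ℝ)⁻¹ •
      (∑ᶠ x ∈ orb (Γ : Set (Equiv.Perm (Fin n))) x₀, ubar x) ≠ (0 : Param n))
    (ωstar : Param n) (hvalid : IsHopfieldParam ωstar)
    (hfeas : AvgConstraint (orb (Γ : Set (Equiv.Perm (Fin n))) x₀) ωstar)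
    (hmin : ∀ ω : Param n, IsHopfieldParam ω →
      AvgConstraint (orb (Γ : Set (Equiv.Perm (Fin n))) x₀) ω →
      pInner ωstar ωstar ≤ pInner ω ω) :
    InvariantUnder (Γ : Set (Equiv.Perm (Fin n))) ωstar := by
  intro σ hσ
  set O := orb (Γ : Set (Equiv.Perm (Fin n))) x₀ with hOdef
  have hO : O.Finite := orb_finite _ _
  set b := permAct σ ωstar with hb
  have hb_param : IsHopfieldParam b := by
    obtain ⟨hs, hd⟩ := hvalid
    constructor
    · apply Matrix.IsSymm.ext
      intro i j
      rw [hb, permAct_fst, permAct_fst]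
      exact hs.apply _ _
    · intro i
      rw [hb, permAct_fst]
      exact hd _
  have hsum : ∀ ω : Param n,
      ∑ᶠ x ∈ O, pInner (ubar x) (permAct σ ω) = ∑ᶠ x ∈ O, pInner (ubar x) ω := by
    intro ω
    refine finsum_mem_eq_of_bijOn (fun y : Fin n → ℝ => fun i => y (σ i))
      (orb_bijOn Γ x₀ σ hσ) ?_
    intro x _
    calc pInner (ubar x) (permAct σ ω)
        = pInner (permAct σ⁻¹ (ubar x)) (permAct σ⁻¹ (permAct σ ω)) :=
          (pInner_permAct σ⁻¹ _ _).symm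
      _ = pInner (ubar fun i => x (σ i)) ω := by
          rw [permAct_permAct_inv, ubar_perm]
          simp
  have hb_feas : AvgConstraint O b := by
    unfold AvgConstraint
    rw [hb, hsum ωstar]
    exact hfeas
  set m : Param n := (1/2 : ℝ) • (ωstar + b) with hm
  have hm_param : IsHopfieldParam m := by
    obtain ⟨hs1, hd1⟩ := hvalid
    obtain ⟨hs2, hd2⟩ := hb_param
    have e1 : ∀ i j, m.1 i j = 1/2 * (ωstar.1 i j + b.1 i j) := by
      intro i j; simp [hm]; ring
    constructor
    · apply Matrix.IsSymm.ext
      intro i j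
      rw [e1, e1, hs1.apply, hs2.apply]
    · intro i
      rw [e1, hd1, hd2]
      ring
  have hm_feas : AvgConstraint O m := by
    unfold AvgConstraint at hfeas hb_feas ⊢
    have hsplit : ∑ᶠ x ∈ O, pInner (ubar x) m
        = 1/2 * (∑ᶠ x ∈ O, pInner (ubar x) ωstar)
          + 1/2 * (∑ᶠ x ∈ O, pInner (ubar x) b) := by
      rw [← hO.coe_toFinset, finsum_mem_coe_finset, finsum_mem_coe_finset,
        finsum_mem_coe_finset, Finset.mul_sum, Finset.mul_sum, ← Finset.sum_add_distrib]
      apply Finset.sum_congr rfl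
      intro x _
      rw [hm, pInner_smul_right, pInner_add_right]
      ring
    rw [hsplit]
    have : ((O.ncard : ℝ))⁻¹ * (1/2 * (∑ᶠ x ∈ O, pInner (ubar x) ωstar)
          + 1/2 * (∑ᶠ x ∈ O, pInner (ubar x) b))
        = 1/2 * ((O.ncard : ℝ)⁻¹ * ∑ᶠ x ∈ O, pInner (ubar x) ωstar)
          + 1/2 * ((O.ncard : ℝ)⁻¹ * ∑ᶠ x ∈ O, pInner (ubar x) b) := by ring
    rw [this]
    linarith
  have hle := hmin m hm_param hm_feas
  have hbb : pInner b b = pInner ωstar ωstar := by rw [hb, pInner_permAct]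
  have hmm : pInner m m
      = 1/4 * (pInner ωstar ωstar + 2 * pInner ωstar b + pInner b b) := by
    rw [hm, pInner_smul_left, pInner_smul_right, pInner_add_left, pInner_add_right,
      pInner_add_right, pInner_comm b ωstar]
    ring
  have hdd : pInner (ωstar - b) (ωstar - b)
      = pInner ωstar ωstar - 2 * pInner ωstar b + pInner b b := by
    rw [pInner_sub_left, pInner_sub_right, pInner_sub_right, pInner_comm b ωstar]
    ring
  have h0 : pInner (ωstar - b) (ωstar - b) ≤ 0 := by
    rw [hdd]
    linarith [hle, hmm, hbb]
  have hz : ωstar - b = 0 :=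
    pInner_self_eq_zero (le_antisymm h0 (pInner_self_nonneg _))
  have : ωstar = b := by
    have := sub_eq_zero.mp hz
    exact this
  rw [hb] at this
  exact this.symm

end HopfieldPaper
end
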